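/- Define φ(t) = −(1/2) ln(27/4) + (3/2) ln(t² + 1) − ln t − (1/12)(2t − 1/t)² for t ≥ 1. Then φ is strictly decreasing on (1, ∞), φ(1) = (1/2) ln(32/27) − 1/12 > 0, and φ(t) → −∞ as t → +∞; consequently φ has a unique zero t* in (1, ∞). (Via the substitution α = (t + 1/t)², φ(t) equals the energy difference F̂_b(q₊) − F̂_b(q₀) between the nematic and isotropic stationary points of the quasi-entropy bulk energy, so this establishes a unique first-order phase transition point α* = (t* + 1/t*)².) -/

import Mathlib

open Real Filter

/-- `φ(t) = −(1/2) ln(27/4) + (3/2) ln(t² + 1) − ln t − (1/12)(2t − 1/t)²`: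
the energy difference `F̂_b(q₊) − F̂_b(q₀)` of the quasi-entropy bulk energy
under the substitution `α = (t + 1/t)²`. -/
noncomputable def phiEnergyDiff (t : ℝ) : ℝ :=
  -(1/2) * Real.log (27/4) + (3/2) * Real.log (t ^ 2 + 1) - Real.log t
    - (1/12) * (2 * t - 1 / t) ^ 2

lemma phi_hasDerivAt {t : ℝ} (ht : 0 < t) :
    HasDerivAt phiEnergyDiff
      ((3/2) * ((t^2+1)⁻¹ * (2*t)) - t⁻¹
        - (1/12) * (2 * (2*t - 1/t) * (2*1 - -(t^2)⁻¹))) t := by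
  have hne : t ≠ 0 := ht.ne'
  have hp : (t:ℝ)^2 + 1 ≠ 0 := by positivity
  have h1 : HasDerivAt (fun x : ℝ => x^2 + 1) (2*t) t := by
    simpa using (hasDerivAt_pow 2 t).add_const 1
  have h2 : HasDerivAt (fun x : ℝ => Real.log (x^2+1)) ((t^2+1)⁻¹ * (2*t)) t :=
    by have := (Real.hasDerivAt_log hp).comp t h1; exact this
  have h3 : HasDerivAt Real.log t⁻¹ t := Real.hasDerivAt_log hne
  have hinv : HasDerivAt (fun x : ℝ => 1/x) (-(t^2)⁻¹) t := by
    have := hasDerivAt_inv hne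
    exact this.congr_of_eventuallyEq (by filter_upwards with x; rw [one_div])
  have h4 : HasDerivAt (fun x : ℝ => 2*x - 1/x) (2*1 - -(t^2)⁻¹) t :=
    ((hasDerivAt_id t).const_mul 2).sub hinv
  have h5 := h4.pow 2
  have H := (((h2.const_mul (3/2:ℝ)).const_add (-(1/2) * Real.log (27/4))).sub h3).sub
      (h5.const_mul (1/12:ℝ))
  refine H.congr_deriv ?_
  push_cast
  ring

lemma phi_deriv_neg {t : ℝ} (ht : 1 < t) :
    (3/2) * ((t^2+1)⁻¹ * (2*t)) - t⁻¹
        - (1/12) * (2 * (2*t - 1/t) * (2*1 - -(t^2)⁻¹)) < 0 := by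
  have ht0 : (0:ℝ) < t := by linarith
  have hne : t ≠ 0 := ht0.ne'
  have hp : (0:ℝ) < t^2 + 1 := by positivity
  rw [show (3/2) * ((t^2+1)⁻¹ * (2*t)) - t⁻¹
        - (1/12) * (2 * (2*t - 1/t) * (2*1 - -(t^2)⁻¹))
      = -((2*t^2-1)^2 * (t^2-1)) / (6 * t^3 * (t^2+1)) by field_simp; ring]
  apply div_neg_of_neg_of_pos
  · have h1 : 0 < t^2 - 1 := by nlinarith
    have h0 : (0:ℝ) < 2*t^2-1 := by nlinarith
    have h2 : 0 < (2*t^2-1)^2 := pow_pos h0 2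
    nlinarith
  · positivity

lemma phi_continuousOn : ContinuousOn phiEnergyDiff (Set.Ici (1:ℝ)) := by
  intro t ht
  have ht0 : (0:ℝ) < t := lt_of_lt_of_le one_pos ht
  exact ((phi_hasDerivAt ht0).continuousAt).continuousWithinAt

lemma phi_strictAntiOn : StrictAntiOn phiEnergyDiff (Set.Ioi (1:ℝ)) := by
  apply StrictAntiOn.mono (s := Set.Ici (1:ℝ)) _ Set.Ioi_subset_Ici_self
  apply strictAntiOn_of_deriv_neg (convex_Ici 1) phi_continuousOn
  intro t ht
  rw [interior_Ici] at ht
  rw [(phi_hasDerivAt (lt_trans one_pos ht)).deriv]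
  exact phi_deriv_neg ht

lemma phi_one : phiEnergyDiff 1 = (1/2) * Real.log (32/27) - 1/12 := by
  have h27 : Real.log (27/4 : ℝ) = 3 * Real.log 3 - 2 * Real.log 2 := by
    rw [Real.log_div (by norm_num) (by norm_num),
      show (27:ℝ) = 3^3 by norm_num, show (4:ℝ) = 2^2 by norm_num,
      Real.log_pow, Real.log_pow]; push_cast; ring
  have h32 : Real.log (32/27 : ℝ) = 5 * Real.log 2 - 3 * Real.log 3 := by
    rw [Real.log_div (by norm_num) (by norm_num),
      show (32:ℝ) = 2^5 by norm_num, show (27:ℝ) = 3^3 by norm_num,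
      Real.log_pow, Real.log_pow]; push_cast; ring
  simp only [phiEnergyDiff, h27, h32]
  norm_num
  ring

lemma phi_one_pos : 0 < phiEnergyDiff 1 := by
  rw [phi_one]
  have h : Real.exp 1 < ((32:ℝ)/27)^6 := by
    have := Real.exp_one_lt_d9
    norm_num at this ⊢
    linarith
  have h2 : (1:ℝ) < Real.log (((32:ℝ)/27)^6) := by
    calc (1:ℝ) = Real.log (Real.exp 1) := (Real.log_exp 1).symm
    _ < _ := Real.log_lt_log (Real.exp_pos 1) h
  rw [Real.log_pow] at h2
  push_cast at h2
  linarith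

lemma phi_tendsto : Tendsto phiEnergyDiff atTop atBot := by
  have key : ∀ t : ℝ, 1 ≤ t → phiEnergyDiff t ≤
      -(1/2) * Real.log (27/4) + (3/2) * Real.log 2 + 2*t - (1/12) * t^2 := by
    intro t ht
    have ht0 : (0:ℝ) < t := lt_of_lt_of_le one_pos ht
    have hlog1 : Real.log (t^2 + 1) ≤ Real.log 2 + 2 * Real.log t := by
      have : Real.log (t^2+1) ≤ Real.log (2*t^2) := by
        apply Real.log_le_log (by positivity)
        nlinarith
      rwa [Real.log_mul (by norm_num) (by positivity), Real.log_pow] at this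
      
    have hlogt : Real.log t ≤ t := (Real.log_le_sub_one_of_pos ht0).trans (by linarith)
    have hlogt0 : 0 ≤ Real.log t := Real.log_nonneg ht
    have hsq : t^2 ≤ (2*t - 1/t)^2 := by
      have h1 : 1/t ≤ t := by
        rw [div_le_iff₀ ht0]; nlinarith
      nlinarith
    simp only [phiEnergyDiff]
    push_cast at hlog1
    nlinarith
  have hpoly : Tendsto (fun t : ℝ => -(1/2) * Real.log (27/4) + (3/2) * Real.log 2
      + 2*t - (1/12) * t^2) atTop atBot := by
    have hlin : Tendsto (fun t : ℝ => (-(1/12):ℝ) * t) atTop atBot :=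
      (tendsto_const_mul_atBot_of_neg (by norm_num)).2 tendsto_id
    have h1 : Tendsto (fun t : ℝ => t * (2 + (-(1/12):ℝ) * t)) atTop atBot :=
      Tendsto.atTop_mul_atBot₀ tendsto_id (tendsto_atBot_add_const_left atTop 2 hlin)
    have h2 := tendsto_atBot_add_const_right atTop
      (-(1/2) * Real.log (27/4) + (3/2) * Real.log 2) h1
    exact h2.congr (fun t => by ring)
  exact tendsto_atBot_mono' atTop (eventually_atTop.2 ⟨1, key⟩) hpoly

/-- `φ` is strictly decreasing on `(1, ∞)`, `φ(1) = (1/2) ln(32/27) − 1/12 > 0`,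
`φ(t) → −∞` as `t → +∞`, and consequently `φ` has a unique zero in `(1, ∞)`. -/
theorem phiEnergyDiff_unique_zero :
    StrictAntiOn phiEnergyDiff (Set.Ioi (1:ℝ)) ∧
    phiEnergyDiff 1 = (1/2) * Real.log (32/27) - 1/12 ∧
    0 < phiEnergyDiff 1 ∧
    Tendsto phiEnergyDiff atTop atBot ∧
    ∃! t : ℝ, t ∈ Set.Ioi (1:ℝ) ∧ phiEnergyDiff t = 0 := by
  refine ⟨phi_strictAntiOn, phi_one, phi_one_pos, phi_tendsto, ?_⟩
  -- existence: pick T > 1 with φ T < 0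
  obtain ⟨T, hT⟩ := (phi_tendsto.eventually (eventually_lt_atBot 0)).and
    (eventually_gt_atTop 1) |>.exists
  obtain ⟨hTneg, hT1⟩ := hT
  have hIcc : ContinuousOn phiEnergyDiff (Set.Icc 1 T) :=
    phi_continuousOn.mono (Set.Icc_subset_Ici_self)
  have hmem : (0:ℝ) ∈ Set.Icc (phiEnergyDiff T) (phiEnergyDiff 1) :=
    ⟨le_of_lt hTneg, le_of_lt phi_one_pos⟩
  obtain ⟨t, htmem, htz⟩ := intermediate_value_Icc' (le_of_lt hT1) hIcc hmem
  have ht1 : 1 < t := by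
    rcases lt_or_eq_of_le htmem.1 with h | h
    · exact h
    · exfalso; rw [← h] at htz; linarith [phi_one_pos, htz]
  refine ⟨t, ⟨ht1, htz⟩, ?_⟩
  rintro s ⟨hs1, hsz⟩
  by_contra hne
  rcases lt_or_gt_of_ne hne with h | h
  · have := phi_strictAntiOn hs1 ht1 h
    rw [hsz, htz] at this; exact lt_irrefl 0 this
  · have := phi_strictAntiOn ht1 hs1 h
    rw [hsz, htz] at this; exact lt_irrefl 0 this
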